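/- Every partition of {1,...,m} corresponds to exactly one S-path of m+1 coordinates; i.e., the sets C_S for distinct S-paths S partition the set of all partitions of {1,...,m}. -/

import Mathlib

def IsSPath (m : ℕ) (S : ℕ → ℕ) : Prop :=
  S 0 = 0 ∧ S m = m ∧ ∀ j, 1 ≤ j → j < m → S j ≤ min j (S (j + 1))

def IsPartitionOf (m : ℕ) (P : Finset (Finset ℕ)) : Prop :=
  (∀ C ∈ P, C.Nonempty ∧ C ⊆ Finset.Icc 1 m) ∧
  (∀ i ∈ Finset.Icc 1 m, ∃! C, C ∈ P ∧ i ∈ C)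

def CorrespondsTo (m : ℕ) (S : ℕ → ℕ) (P : Finset (Finset ℕ)) : Prop :=
  IsPartitionOf m P ∧
  (∀ C ∈ P, ∃ j : ℕ, C.max = (j : WithBot ℕ) ∧ S (j - 1) < S j ∧ C.card = S j - S (j - 1)) ∧
  (∀ j ∈ Finset.Icc 1 m, S (j - 1) < S j → ∃ C ∈ P, C.max = (j : WithBot ℕ))

/-- Every partition of `{1,…,m}` corresponds to exactly one S-path of `m+1` coordinates
(unique as a function on the coordinates `0,…,m`); i.e. the classes `C_S` partition the
set of all partitions of `{1,…,m}`. -/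
theorem existsUnique_spath_of_partition (m : ℕ) (P : Finset (Finset ℕ))
    (hP : IsPartitionOf m P) :
    ∃ S : ℕ → ℕ, (IsSPath m S ∧ CorrespondsTo m S P) ∧
      ∀ S' : ℕ → ℕ, IsSPath m S' → CorrespondsTo m S' P → ∀ j ≤ m, S' j = S j := by
  classical
  obtain ⟨hcells, hcover⟩ := hP
  set S : ℕ → ℕ := fun j => ∑ C ∈ P.filter (fun C => C.max ≤ (j : WithBot ℕ)), C.card
    with hSdef
  -- cells are pairwise disjoint
  have hdisj : ∀ C ∈ P, ∀ D ∈ P, C ≠ D → Disjoint C D := by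
    intro C hC D hD hne
    rw [Finset.disjoint_left]
    intro a haC haD
    have ha : a ∈ Finset.Icc 1 m := (hcells C hC).2 haC
    obtain ⟨E, _, hEuniq⟩ := hcover a ha
    exact hne ((hEuniq C ⟨hC, haC⟩).trans (hEuniq D ⟨hD, haD⟩).symm)
  have hsum : ∀ T : Finset (Finset ℕ), T ⊆ P → ∑ C ∈ T, C.card = (T.biUnion id).card := by
    intro T hT
    exact (Finset.card_biUnion (fun C hC D hD hne => hdisj C (hT hC) D (hT hD) hne)).symm
  -- S j ≤ j
  have hSle : ∀ j, S j ≤ j := by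
    intro j
    have hsub : ((P.filter (fun C => C.max ≤ (j : WithBot ℕ))).biUnion id) ⊆ Finset.Icc 1 j := by
      intro x hx
      simp only [Finset.mem_biUnion, Finset.mem_filter, id] at hx
      obtain ⟨C, ⟨hC, hmax⟩, hxC⟩ := hx
      have h1 : x ∈ Finset.Icc 1 m := (hcells C hC).2 hxC
      have h2 : (x : WithBot ℕ) ≤ C.max := Finset.le_max hxC
      have h3 : (x : WithBot ℕ) ≤ (j : WithBot ℕ) := h2.trans hmax
      exact Finset.mem_Icc.2 ⟨(Finset.mem_Icc.1 h1).1, by exact_mod_cast h3⟩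
    calc S j = ((P.filter (fun C => C.max ≤ (j : WithBot ℕ))).biUnion id).card :=
          hsum _ (Finset.filter_subset _ _)
      _ ≤ (Finset.Icc 1 j).card := Finset.card_le_card hsub
      _ = j := by simp
  have hS0 : S 0 = 0 := Nat.le_zero.1 (hSle 0)
  have hmono : ∀ j k : ℕ, j ≤ k → S j ≤ S k := by
    intro j k hjk
    apply Finset.sum_le_sum_of_subset
    apply Finset.monotone_filter_right
    intro C _ hC
    exact hC.trans (by exact_mod_cast hjk)
  -- max of each cell
  have hmaxmem : ∀ C ∈ P, ∃ j : ℕ, C.max = (j : WithBot ℕ) ∧ j ∈ C ∧ 1 ≤ j ∧ j ≤ m := by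
    intro C hC
    obtain ⟨hne, hsub⟩ := hcells C hC
    have hmax := Finset.max'_mem C hne
    refine ⟨C.max' hne, (Finset.coe_max' hne).symm, hmax, ?_, ?_⟩
    · exact (Finset.mem_Icc.1 (hsub hmax)).1
    · exact (Finset.mem_Icc.1 (hsub hmax)).2
  have hSm : S m = m := by
    have hfilt : P.filter (fun C => C.max ≤ (m : WithBot ℕ)) = P := by
      apply Finset.filter_true_of_mem
      intro C hC
      obtain ⟨j, hj, _, _, hjm⟩ := hmaxmem C hC
      rw [hj]; exact_mod_cast hjm
    have hun : P.biUnion id = Finset.Icc 1 m := by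
      apply Finset.Subset.antisymm
      · intro x hx
        simp only [Finset.mem_biUnion, id] at hx
        obtain ⟨C, hC, hxC⟩ := hx
        exact (hcells C hC).2 hxC
      · intro i hi
        obtain ⟨C, ⟨hC, hiC⟩, _⟩ := hcover i hi
        simp only [Finset.mem_biUnion, id]
        exact ⟨C, hC, hiC⟩
    calc S m = (P.biUnion id).card := by rw [hSdef]; simp only [hfilt]; exact hsum P le_rfl
      _ = m := by rw [hun]; simp
  -- filter decomposition at level j
  have hfiltdec : ∀ j : ℕ, 1 ≤ j → ∀ D ∈ P, D.max ≤ (j : WithBot ℕ) →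
      D.max ≤ ((j - 1 : ℕ) : WithBot ℕ) ∨ D.max = (j : WithBot ℕ) := by
    intro j hj D hD hDj
    obtain ⟨k, hk, _, _, _⟩ := hmaxmem D hD
    rw [hk] at hDj ⊢
    have hkj : k ≤ j := by exact_mod_cast hDj
    rcases Nat.lt_or_ge k j with h | h
    · left; exact_mod_cast Nat.le_sub_one_of_lt h
    · right; exact_mod_cast le_antisymm hkj h
  -- increment when there is a cell with max j
  have hinc : ∀ j : ℕ, 1 ≤ j → ∀ C ∈ P, C.max = (j : WithBot ℕ) → S j = S (j - 1) + C.card := by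
    intro j hj C hC hCmax
    have hjC : j ∈ C := Finset.mem_of_max hCmax
    have hjm : j ∈ Finset.Icc 1 m := by
      obtain ⟨k, hk, hkC, hk1, hkm⟩ := hmaxmem C hC
      have : k = j := by rw [hk] at hCmax; exact_mod_cast hCmax
      subst this; exact Finset.mem_Icc.2 ⟨hk1, hkm⟩
    have huniq : ∀ D ∈ P, D.max = (j : WithBot ℕ) → D = C := by
      intro D hD hDmax
      obtain ⟨E, _, hEuniq⟩ := hcover j hjm
      exact (hEuniq D ⟨hD, Finset.mem_of_max hDmax⟩).trans (hEuniq C ⟨hC, hjC⟩).symm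
    have hCnot : C.max ≤ ((j - 1 : ℕ) : WithBot ℕ) → False := by
      intro h
      rw [hCmax] at h
      have : j ≤ j - 1 := by exact_mod_cast h
      omega
    have heq : P.filter (fun D => D.max ≤ (j : WithBot ℕ)) =
        insert C (P.filter (fun D => D.max ≤ ((j - 1 : ℕ) : WithBot ℕ))) := by
      ext D
      simp only [Finset.mem_filter, Finset.mem_insert]
      constructor
      · rintro ⟨hD, hDle⟩
        rcases hfiltdec j hj D hD hDle with h | h
        · exact Or.inr ⟨hD, h⟩
        · exact Or.inl (huniq D hD h)
      · rintro (rfl | ⟨hD, hDle⟩)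
        · exact ⟨hC, le_of_eq hCmax⟩
        · refine ⟨hD, hDle.trans ?_⟩
          exact_mod_cast Nat.sub_le j 1
    rw [hSdef]
    simp only [heq]
    rw [Finset.sum_insert (by
      simp only [Finset.mem_filter, not_and]
      intro _ h
      exact hCnot h)]
    omega
  -- no increment when there is no cell with max j
  have hnoinc : ∀ j : ℕ, 1 ≤ j → (∀ C ∈ P, C.max ≠ (j : WithBot ℕ)) → S j = S (j - 1) := by
    intro j hj hno
    have heq : P.filter (fun D => D.max ≤ (j : WithBot ℕ)) =
        P.filter (fun D => D.max ≤ ((j - 1 : ℕ) : WithBot ℕ)) := by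
      ext D
      simp only [Finset.mem_filter]
      constructor
      · rintro ⟨hD, hDle⟩
        rcases hfiltdec j hj D hD hDle with h | h
        · exact ⟨hD, h⟩
        · exact absurd h (hno D hD)
      · rintro ⟨hD, hDle⟩
        refine ⟨hD, hDle.trans ?_⟩
        exact_mod_cast Nat.sub_le j 1
    rw [hSdef]; simp only [heq]
  have hSpath : IsSPath m S := by
    refine ⟨hS0, hSm, fun j hj hjm => le_min (hSle j) (hmono j (j + 1) (Nat.le_succ j))⟩
  have hCorr : CorrespondsTo m S P := by
    refine ⟨⟨hcells, hcover⟩, ?_, ?_⟩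
    · intro C hC
      obtain ⟨j, hj, hjC, hj1, hjm⟩ := hmaxmem C hC
      have h := hinc j hj1 C hC hj
      have hpos : 0 < C.card := Finset.card_pos.2 ⟨j, hjC⟩
      exact ⟨j, hj, by omega, by omega⟩
    · intro j hj hlt
      by_contra hcon
      push_neg at hcon
      have := hnoinc j (Finset.mem_Icc.1 hj).1 hcon
      omega
  refine ⟨S, ⟨hSpath, hCorr⟩, ?_⟩
  intro S' hS' hC' j hjm
  obtain ⟨hS'0, hS'm, hS'mono⟩ := hS'
  obtain ⟨_, hC'2, hC'3⟩ := hC'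
  induction j with
  | zero => rw [hS'0, hS0]
  | succ j ih =>
    have ihj : S' j = S j := ih (by omega)
    set k := j + 1 with hk
    have hk1 : 1 ≤ k := by omega
    have hkm : k ≤ m := hjm
    by_cases hex : ∃ C ∈ P, C.max = (k : WithBot ℕ)
    · obtain ⟨C, hC, hCmax⟩ := hex
      obtain ⟨l, hl, hl2, hl3⟩ := hC'2 C hC
      have hlk : l = k := by rw [hl] at hCmax; exact_mod_cast hCmax
      subst hlk
      have h1 : S' k = S' (k - 1) + C.card := by omega
      have h2 : S k = S (k - 1) + C.card := hinc k hk1 C hC hCmax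
      have : k - 1 = j := by omega
      rw [this] at h1 h2
      omega
    · push_neg at hex
      have h2 : S k = S (k - 1) := hnoinc k hk1 hex
      have h3 : ¬ S' (k - 1) < S' k := by
        intro hlt
        obtain ⟨C, hC, hCm⟩ := hC'3 k (Finset.mem_Icc.2 ⟨hk1, hkm⟩) hlt
        exact hex C hC hCm
      have h4 : S' (k - 1) ≤ S' k := by
        rcases Nat.eq_or_lt_of_le hk1 with h | h
        · rw [← h]; simp [hS'0]
        · have h5 := hS'mono (k - 1) (by omega) (by omega)
          have : k - 1 + 1 = k := by omega
          rw [this] at h5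
          exact h5.trans (min_le_right _ _)
      have hkj : k - 1 = j := by omega
      rw [hkj] at h2 h3 h4
      omega
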